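/- There exists an instance of a bilevel problem with a single binary leader variable and single binary follower variable, together with a prediction function NN on {0,1}, such that the upper-level approximation (minimizing NN(x) over feasible x) returns a leader decision x = 1 for which the follower problem max{ y : y ∈ {0,1}, 2x + y ≤ 1 } is infeasible, while the lower-level approximation (the surrogate VFR with slack) returns the bilevel-feasible decision x = 0. Concretely, for the problem min_x y s.t. y ∈ argmax{ y ∈ {0,1} : 2x + y ≤ 1 }, taking NN(0) = 2 and NN(1) = 0 exhibits this behavior. -/

import Mathlib

/-- Example 1: there is an instance (the problem min_x y s.t.
y ∈ argmax{y ∈ {0,1} : 2x + y ≤ 1}) and a prediction NN with NN(0)=2,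
NN(1)=0 such that the upper-level approximation selects x = 1, which makes
the follower infeasible, while the lower-level approximation (surrogate VFR
with slack, penalty λ > 1) only returns the bilevel-feasible x = 0. -/
theorem upper_level_can_be_infeasible_lower_level_not :
    ∃ NN : ℝ → ℝ, NN 0 = 2 ∧ NN 1 = 0 ∧
      -- upper-level approximation: x = 1 minimizes NN over {0,1}
      (∀ x ∈ ({0, 1} : Set ℝ), NN 1 ≤ NN x) ∧
      -- the follower problem at x = 1 is infeasible
      (¬ ∃ y ∈ ({0, 1} : Set ℝ), 2 * 1 + y ≤ 1) ∧
      -- lower-level approximation: every optimal (x,y,s) has x = 0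
      (∀ lam : ℝ, 1 < lam →
        ∀ x y s : ℝ, x ∈ ({0, 1} : Set ℝ) → y ∈ ({0, 1} : Set ℝ) →
          0 ≤ s → 2 * x + y ≤ 1 → NN x - s ≤ y →
          (∀ x' y' s' : ℝ, x' ∈ ({0, 1} : Set ℝ) → y' ∈ ({0, 1} : Set ℝ) →
            0 ≤ s' → 2 * x' + y' ≤ 1 → NN x' - s' ≤ y' →
            y + lam * s ≤ y' + lam * s') →
          x = 0) := by
  refine ⟨fun x => 2 - 2 * x, by norm_num, by norm_num, ?_, ?_, ?_⟩
  · rintro x (rfl | rfl) <;> norm_num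
  · rintro ⟨y, (rfl | rfl), h⟩ <;> norm_num at h
  · rintro lam _ x y s (rfl | rfl) (rfl | rfl) _ hfeas _ _ <;> norm_num at hfeas <;> norm_num
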